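/- arXiv:2505.10404 — 6 statements merged into one kernel-verified Lean document; each statement's English description precedes it below -/
import Mathlib

section
/- Let A be a symmetric positive definite n×n matrix, B an N×n matrix, and M a symmetric positive definite N×N matrix. If for all nonzero u ∈ ℝⁿ one has uᵀ Bᵀ M⁻¹ B u ≤ d·uᵀ A u, then for all nonzero p ∈ ℝ^N one has pᵀ B A⁻¹ Bᵀ p ≤ d·pᵀ M p. -/
open Matrix

private lemma mat_symm {N : ℕ} {M : Matrix (Fin N) (Fin N) ℝ} (hM : M.IsHermitian)
    (p q : Fin N → ℝ) : p ⬝ᵥ M *ᵥ q = q ⬝ᵥ M *ᵥ p := by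
  have hMt : Mᵀ = M := by
    have := hM.eq
    rwa [conjTranspose_eq_transpose_of_trivial] at this
  rw [dotProduct_mulVec, dotProduct_comm, ← mulVec_transpose, hMt]

private lemma mat_cs {N : ℕ} {M : Matrix (Fin N) (Fin N) ℝ} (hM : M.PosDef)
    (p q : Fin N → ℝ) :
    (p ⬝ᵥ M *ᵥ q) ^ 2 ≤ (p ⬝ᵥ M *ᵥ p) * (q ⬝ᵥ M *ᵥ q) := by
  have key : ∀ x : ℝ, 0 ≤ (q ⬝ᵥ M *ᵥ q) * (x * x) + (2 * (p ⬝ᵥ M *ᵥ q)) * x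
      + (p ⬝ᵥ M *ᵥ p) := by
    intro x
    have h0 := hM.posSemidef.dotProduct_mulVec_nonneg (p + x • q)
    have hsym := mat_symm hM.1 q p
    simp only [star_trivial, dotProduct_add, add_dotProduct, mulVec_add, mulVec_smul,
      dotProduct_smul, smul_dotProduct, smul_eq_mul] at h0
    rw [hsym] at h0
    nlinarith [h0]
  have hd := discrim_le_zero key
  rw [discrim] at hd
  nlinarith [hd]

/-- duality between the Rayleigh quotients of BᵀM⁻¹B vs A and BA⁻¹Bᵀ vs M. -/
theorem stmt2 {n N : ℕ} (A : Matrix (Fin n) (Fin n) ℝ) (hA : A.PosDef)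
    (M : Matrix (Fin N) (Fin N) ℝ) (hM : M.PosDef)
    (B : Matrix (Fin N) (Fin n) ℝ) (d : ℝ) (hd : 0 < d)
    (h : ∀ u : Fin n → ℝ, u ≠ 0 →
      u ⬝ᵥ ((Bᵀ * M⁻¹ * B) *ᵥ u) ≤ d * (u ⬝ᵥ (A *ᵥ u))) :
    ∀ p : Fin N → ℝ, p ≠ 0 →
      p ⬝ᵥ ((B * A⁻¹ * Bᵀ) *ᵥ p) ≤ d * (p ⬝ᵥ (M *ᵥ p)) := by
  intro p hp
  have hAinv : IsUnit A.det := isUnit_iff_ne_zero.2 hA.det_pos.ne'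
  have hMinv : IsUnit M.det := isUnit_iff_ne_zero.2 hM.det_pos.ne'
  set u := A⁻¹ *ᵥ (Bᵀ *ᵥ p) with hu
  set q := M⁻¹ *ᵥ (B *ᵥ u) with hq
  have ht : p ⬝ᵥ ((B * A⁻¹ * Bᵀ) *ᵥ p) = p ⬝ᵥ (B *ᵥ u) := by
    rw [hu, ← mulVec_mulVec, ← mulVec_mulVec]
  have hMq : M *ᵥ q = B *ᵥ u := by
    rw [hq, mulVec_mulVec, mul_nonsing_inv _ hMinv, one_mulVec]
  have hAu : A *ᵥ u = Bᵀ *ᵥ p := by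
    rw [hu, mulVec_mulVec, mul_nonsing_inv _ hAinv, one_mulVec]
  set t := p ⬝ᵥ (B *ᵥ u) with htdef
  have htA : t = u ⬝ᵥ (A *ᵥ u) := by
    rw [hAu, dotProduct_mulVec, vecMul_transpose, htdef, dotProduct_comm]
  have hqMq : q ⬝ᵥ (M *ᵥ q) = u ⬝ᵥ ((Bᵀ * M⁻¹ * B) *ᵥ u) := by
    rw [hMq, ← mulVec_mulVec, ← mulVec_mulVec, dotProduct_mulVec u Bᵀ _,
      vecMul_transpose, hq]
    exact dotProduct_comm _ _
  have hpMq : p ⬝ᵥ (M *ᵥ q) = t := by rw [hMq, htdef]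
  rw [ht]
  have htnn : 0 ≤ t := by
    have := hA.posSemidef.dotProduct_mulVec_nonneg u
    rw [star_trivial] at this
    exact htA ▸ this
  have hcs := mat_cs hM p q
  rw [hpMq, hqMq] at hcs
  have hpMp : 0 < p ⬝ᵥ M *ᵥ p := by simpa only [star_trivial] using hM.dotProduct_mulVec_pos hp
  by_cases hu0 : u = 0
  · have ht0 : t = 0 := by rw [htdef, hu0, mulVec_zero, dotProduct_zero]
    rw [ht0]
    positivity
  · have hb := h u hu0
    have hcs2 : t ^ 2 ≤ (p ⬝ᵥ M *ᵥ p) * (d * (u ⬝ᵥ (A *ᵥ u))) :=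
      hcs.trans (mul_le_mul_of_nonneg_left hb (by simpa only [star_trivial] using hM.posSemidef.dotProduct_mulVec_nonneg p))
    rw [← htA] at hcs2
    rcases eq_or_lt_of_le htnn with h0 | h0
    · rw [← h0]; positivity
    · nlinarith [hcs2]
end

section
/- Let m, ŝ, s be real numbers with 0 < c₁ ≤ s/ŝ ≤ d and 0 < m/ŝ ≤ 1 (where ŝ > 0). Then the roots λ± = (1/2)(m/ŝ) ± (1/2)√((m/ŝ)² + 4 s/ŝ) of λ² − (m/ŝ)λ − s/ŝ = 0 satisfy λ₊ ∈ [√c₁, (1+√(1+4d))/2] and λ₋ ∈ [−d/√c₁, −2c₁/(1+√(1+4d))]. -/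
/-- localization of the two roots of λ² − (m/ŝ)λ − s/ŝ = 0. -/
theorem stmt4 (c₁ d m s shat : ℝ)
    (hshat : 0 < shat) (hc₁ : 0 < c₁)
    (hlow : c₁ ≤ s / shat) (hup : s / shat ≤ d)
    (hm : 0 < m / shat) (hm1 : m / shat ≤ 1)
    (lamp lamm : ℝ)
    (hp : lamp = (1/2) * (m / shat) + (1/2) * Real.sqrt ((m / shat)^2 + 4 * (s / shat)))
    (hn : lamm = (1/2) * (m / shat) - (1/2) * Real.sqrt ((m / shat)^2 + 4 * (s / shat))) :
    (Real.sqrt c₁ ≤ lamp ∧ lamp ≤ (1 + Real.sqrt (1 + 4 * d)) / 2) ∧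
    (-(d / Real.sqrt c₁) ≤ lamm ∧ lamm ≤ -(2 * c₁ / (1 + Real.sqrt (1 + 4 * d)))) := by
  set t := m / shat with htdef
  set r := s / shat with hrdef
  have hr0 : 0 < r := lt_of_lt_of_le hc₁ hlow
  have hA2 : Real.sqrt (t^2 + 4*r) ^ 2 = t^2 + 4*r := Real.sq_sqrt (by nlinarith)
  set A := Real.sqrt (t^2 + 4*r) with hAdef
  have hA0 : 0 ≤ A := Real.sqrt_nonneg _
  have hB2 : Real.sqrt c₁ ^ 2 = c₁ := Real.sq_sqrt hc₁.le
  set B := Real.sqrt c₁ with hBdef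
  have hB0 : 0 < B := Real.sqrt_pos.mpr hc₁
  have hC2 : Real.sqrt (1 + 4*d) ^ 2 = 1 + 4*d := Real.sq_sqrt (by nlinarith)
  set C := Real.sqrt (1 + 4*d) with hCdef
  have hC0 : 0 ≤ C := Real.sqrt_nonneg _
  have hAt : t ≤ A := by
    have h1 : t = Real.sqrt (t^2) := (Real.sqrt_sq hm.le).symm
    rw [h1, hAdef]
    exact Real.sqrt_le_sqrt (by nlinarith)
  have hAC : A ≤ C := by
    rw [hAdef, hCdef]
    exact Real.sqrt_le_sqrt (by nlinarith)
  have h2B : 2*B ≤ A := by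
    have h1 : Real.sqrt (4*c₁) = 2*B := by
      rw [show (4:ℝ)*c₁ = (2*B)^2 by nlinarith, Real.sqrt_sq (by positivity)]
    rw [← h1, hAdef]
    exact Real.sqrt_le_sqrt (by nlinarith)
  clear_value A B C t r
  have hgoal := show (2:ℝ) * (s/shat) = 2*r by rw [hrdef]
  have hmul : (A - t) * (2*B) ≤ (A - t) * (A + t) := by
    apply mul_le_mul_of_nonneg_left (by linarith) (by linarith)
  have hmul2 : (A - t) * (A + t) ≤ (A - t) * (1 + C) := by
    apply mul_le_mul_of_nonneg_left (by linarith) (by linarith)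
  constructor
  · exact ⟨by rw [hp]; linarith, by rw [hp]; linarith⟩
  have hprod : (A - t) * (A + t) = 4*r := by
    rw [show (A - t) * (A + t) = A^2 - t^2 from by ring, hA2]; ring
  refine ⟨?_, ?_⟩
  · rw [hn, neg_le, le_div_iff₀ hB0]
    have e : (A - t) * (2*B) = 2 * (B * (A - t)) := by ring
    have key : B * (A - t) ≤ 2 * d := by linarith
    have e2 : -(1/2 * t - 1/2 * A) * B = (B * (A - t)) / 2 := by ring
    rw [e2]; linarith
  · rw [hn]
    have h1C : 0 < 1 + C := by linarith
    have key : 4 * c₁ ≤ (A - t) * (1 + C) := by linarith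
    rw [show -(2*c₁/(1+C)) = (-(2*c₁))/(1+C) by ring, le_div_iff₀ h1C]
    linarith [key]
end

section
/- Let A be symmetric positive definite n×n, B an N×n matrix, M a diagonal positive definite N×N matrix with pᵀBA⁻¹Bᵀp ≤ d·pᵀMp for all p. Then ‖A⁻¹Bᵀ‖² ≤ d·λmax(M)/λmin(A), where ‖·‖ is the spectral norm. -/
open Matrix

lemma rayleigh_lower {n : ℕ} (A : Matrix (Fin n) (Fin n) ℝ) (hA : A.IsHermitian)
    (c : ℝ) (hc : ∀ i, c ≤ hA.eigenvalues i) (x : Fin n → ℝ) :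
    c * (x ⬝ᵥ x) ≤ x ⬝ᵥ (A *ᵥ x) := by
  set U : Matrix (Fin n) (Fin n) ℝ := (hA.eigenvectorUnitary : Matrix (Fin n) (Fin n) ℝ) with hU
  set y : Fin n → ℝ := star U *ᵥ x with hy
  have hUU : U * star U = 1 := (Matrix.mem_unitaryGroup_iff).mp hA.eigenvectorUnitary.2
  have h1 : star U *ᵥ x = x ᵥ* U := by
    rw [star_eq_conjTranspose, conjTranspose_eq_transpose_of_trivial, mulVec_transpose]
  have hxy : x ⬝ᵥ x = y ⬝ᵥ y := by
    rw [hy, h1, ← dotProduct_mulVec, ← h1, mulVec_mulVec, hUU, one_mulVec]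
  have hquad : x ⬝ᵥ (A *ᵥ x) = ∑ i, hA.eigenvalues i * (y i * y i) := by
    conv_lhs => rw [hA.spectral_theorem, Unitary.conjStarAlgAut_apply]
    rw [← mulVec_mulVec, ← mulVec_mulVec, dotProduct_mulVec, ← h1, ← hy]
    simp [dotProduct, mulVec_diagonal, Finset.mul_sum, mul_comm, mul_assoc, mul_left_comm]
  rw [hxy, hquad, dotProduct, Finset.mul_sum]
  exact Finset.sum_le_sum fun i _ => mul_le_mul_of_nonneg_right (hc i) (mul_self_nonneg _)

/-- ‖A⁻¹Bᵀ‖² ≤ d·λmax(M)/λmin(A), stated via the squared Euclidean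
norm of (A⁻¹Bᵀ)p against the squared norm of p. -/
theorem stmt7 {n N : ℕ} (hn : 0 < n) (hNpos : 0 < N)
    (A : Matrix (Fin n) (Fin n) ℝ) (hA : A.PosDef)
    (B : Matrix (Fin N) (Fin n) ℝ)
    (Md : Fin N → ℝ) (hMd : ∀ i, 0 < Md i)
    (M : Matrix (Fin N) (Fin N) ℝ) (hM : M = Matrix.diagonal Md)
    (d : ℝ) (hd : 0 < d)
    (h : ∀ p : Fin N → ℝ, p ⬝ᵥ ((B * A⁻¹ * Bᵀ) *ᵥ p) ≤ d * (p ⬝ᵥ (M *ᵥ p)))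
    (lmaxM lminA : ℝ)
    (hlmax : lmaxM = ⨆ i, Md i)
    (hlmin : lminA = ⨅ i, hA.1.eigenvalues i) :
    ∀ p : Fin N → ℝ,
      ((A⁻¹ * Bᵀ) *ᵥ p) ⬝ᵥ ((A⁻¹ * Bᵀ) *ᵥ p) ≤
        d * lmaxM / lminA * (p ⬝ᵥ p) := by
  intro p
  haveI : Nonempty (Fin n) := ⟨⟨0, hn⟩⟩
  haveI : Nonempty (Fin N) := ⟨⟨0, hNpos⟩⟩
  set q : Fin n → ℝ := (A⁻¹ * Bᵀ) *ᵥ p with hq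
  -- lminA positive
  obtain ⟨i0, hi0⟩ := exists_eq_ciInf_of_finite (f := hA.1.eigenvalues)
  have hlminpos : 0 < lminA := by rw [hlmin, ← hi0]; exact hA.eigenvalues_pos i0
  have hcle : ∀ i, lminA ≤ hA.1.eigenvalues i := fun i => by
    rw [hlmin]; exact ciInf_le (Set.Finite.bddBelow (Set.finite_range _)) i
  -- step 1 : lminA * (q ⬝ᵥ q) ≤ q ⬝ᵥ (A *ᵥ q)
  have step1 := rayleigh_lower A hA.1 lminA hcle q
  -- step 2 : q ⬝ᵥ (A *ᵥ q) = p ⬝ᵥ ((B * A⁻¹ * Bᵀ) *ᵥ p)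
  have hinv : A * A⁻¹ = 1 := Matrix.mul_nonsing_inv A hA.det_pos.ne'.isUnit
  have hAq : A *ᵥ q = Bᵀ *ᵥ p := by
    rw [hq, mulVec_mulVec, ← Matrix.mul_assoc, hinv, Matrix.one_mul]
  have step2 : q ⬝ᵥ (A *ᵥ q) = p ⬝ᵥ ((B * A⁻¹ * Bᵀ) *ᵥ p) := by
    rw [hAq, ← mulVec_mulVec, dotProduct_mulVec p, ← mulVec_transpose,
      dotProduct_comm, hq, transpose_mul, transpose_nonsing_inv,
      ← conjTranspose_eq_transpose_of_trivial A, hA.1.eq]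
    exact dotProduct_comm _ _
  -- step 3 : p ⬝ᵥ (M *ᵥ p) ≤ lmaxM * (p ⬝ᵥ p)
  have hle : ∀ i, Md i ≤ lmaxM := fun i => by
    rw [hlmax]; exact le_ciSup (Set.Finite.bddAbove (Set.finite_range _)) i
  have step3 : p ⬝ᵥ (M *ᵥ p) ≤ lmaxM * (p ⬝ᵥ p) := by
    rw [hM]; simp only [dotProduct]; rw [Finset.mul_sum]
    apply Finset.sum_le_sum
    intro i _
    rw [mulVec_diagonal]
    calc p i * (Md i * p i) = Md i * (p i * p i) := by ring
      _ ≤ lmaxM * (p i * p i) := mul_le_mul_of_nonneg_right (hle i) (mul_self_nonneg _)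
  have chain : lminA * (q ⬝ᵥ q) ≤ d * lmaxM * (p ⬝ᵥ p) := by
    calc lminA * (q ⬝ᵥ q) ≤ q ⬝ᵥ (A *ᵥ q) := step1
      _ = p ⬝ᵥ ((B * A⁻¹ * Bᵀ) *ᵥ p) := step2
      _ ≤ d * (p ⬝ᵥ (M *ᵥ p)) := h p
      _ ≤ d * (lmaxM * (p ⬝ᵥ p)) := by
          exact mul_le_mul_of_nonneg_left step3 hd.le
      _ = d * lmaxM * (p ⬝ᵥ p) := by ring
  rw [div_mul_eq_mul_div, le_div_iff₀ hlminpos, mul_comm _ lminA]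
  exact chain
end

section
/- Let a = (a₁,…,a_N) and b = (γ, b₂,…,b_N) be vectors in ℝ^N with ‖b‖ = 1 and γ ≠ 0. Write a = αb + c with α = bᵀa and bᵀc = 0. Then Σᵢ aᵢ² ≤ α² + (1/γ²)·Σ_{i=2}^N cᵢ². -/
open Matrix Finset

/-- for a = αb + c with b a unit vector, b 0 = γ ≠ 0 and bᵀc = 0,
one has Σ aᵢ² ≤ α² + (1/γ²)·Σ_{i≥2} cᵢ². -/
theorem stmt10 {n : ℕ} (a b : Fin (n + 1) → ℝ)
    (hb : b ⬝ᵥ b = 1) (γ : ℝ) (hγdef : γ = b 0) (hγ : γ ≠ 0)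
    (α : ℝ) (hα : α = b ⬝ᵥ a)
    (c : Fin (n + 1) → ℝ) (hc : c = a - α • b) :
    ∑ i, (a i) ^ 2 ≤ α ^ 2 + (1 / γ ^ 2) * ∑ i ∈ Finset.univ.erase 0, (c i) ^ 2 := by
  simp only [dotProduct] at hb hα
  -- orthogonality: ∑ b i * c i = 0
  have horth : ∑ i, b i * c i = 0 := by
    subst hc
    simp only [Pi.sub_apply, Pi.smul_apply, smul_eq_mul, mul_sub]
    rw [Finset.sum_sub_distrib]
    have : ∑ i, b i * (α * b i) = α * ∑ i, b i * b i := by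
      rw [Finset.mul_sum]; congr 1; ext i; ring
    rw [this, hb, hα]; ring
  -- a i = α * b i + c i
  have ha : ∀ i, a i = α * b i + c i := by
    intro i; rw [hc]; simp [mul_comm]
  -- pythagoras: ∑ a² = α² + ∑ c²
  have hpyth : ∑ i, (a i) ^ 2 = α ^ 2 + ∑ i, (c i) ^ 2 := by
    have : ∑ i, (a i) ^ 2
        = α ^ 2 * ∑ i, b i * b i + 2 * α * ∑ i, b i * c i + ∑ i, (c i) ^ 2 := by
      rw [Finset.mul_sum, Finset.mul_sum, ← Finset.sum_add_distrib,
        ← Finset.sum_add_distrib]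
      congr 1; ext i; rw [ha i]; ring
    rw [this, hb, horth]; ring
  set S := ∑ i ∈ Finset.univ.erase 0, (c i) ^ 2 with hS
  set T := ∑ i ∈ Finset.univ.erase 0, (b i) ^ 2 with hT
  have hmem : (0 : Fin (n + 1)) ∈ (Finset.univ : Finset (Fin (n + 1))) :=
    Finset.mem_univ _
  have hsplitb : γ ^ 2 + T = 1 := by
    rw [← hb, ← Finset.add_sum_erase _ _ hmem, hγdef]; ring_nf; rw [hT]
  have hsplitc : ∑ i, (c i) ^ 2 = (c 0) ^ 2 + S := by
    rw [← Finset.add_sum_erase _ _ hmem]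
  have hsplito : γ * c 0 + ∑ i ∈ Finset.univ.erase 0, b i * c i = 0 := by
    rw [← horth, ← Finset.add_sum_erase _ _ hmem, hγdef]
  -- Cauchy–Schwarz
  have hcs : (∑ i ∈ Finset.univ.erase 0, b i * c i) ^ 2 ≤ T * S := by
    simpa [hT, hS, sq] using
      Finset.sum_mul_sq_le_sq_mul_sq (Finset.univ.erase 0) b c
  have hkey : γ ^ 2 * (c 0) ^ 2 ≤ T * S := by
    have h2 : γ * c 0 = -(∑ i ∈ Finset.univ.erase 0, b i * c i) := by linarith
    calc γ ^ 2 * (c 0) ^ 2 = (γ * c 0) ^ 2 := by ring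
      _ = (∑ i ∈ Finset.univ.erase 0, b i * c i) ^ 2 := by rw [h2, neg_sq]
      _ ≤ T * S := hcs
  have hγ2 : 0 < γ ^ 2 := by positivity
  have hSnn : 0 ≤ S := Finset.sum_nonneg fun i _ => sq_nonneg _
  rw [hpyth, hsplitc]
  have : (c 0) ^ 2 ≤ (1 - γ ^ 2) / γ ^ 2 * S := by
    rw [div_mul_eq_mul_div, le_div_iff₀ hγ2]
    nlinarith
  have h1 : 1 / γ ^ 2 * S = S + (1 - γ ^ 2) / γ ^ 2 * S := by
    field_simp; ring
  linarith
end

section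
/- Let e denote the normalized all-ones vector in ℝ^N and let Bᵀ be a matrix whose null space is exactly span(e). Let A be symmetric positive definite, w a unit vector with γ = wᵀe ≠ 0, ρ > 0, and M symmetric positive definite. Then the matrix S = ρ w wᵀ + B A⁻¹ Bᵀ is symmetric positive definite (in particular nonsingular). -/
open Matrix

lemma aux_vecMulVec_quad {N : ℕ} (w x : Fin N → ℝ) :
    x ⬝ᵥ ((vecMulVec w w) *ᵥ x) = (w ⬝ᵥ x) * (w ⬝ᵥ x) := by
  simp only [dotProduct, mulVec, vecMulVec_apply, Finset.mul_sum, Finset.sum_mul]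
  rw [Finset.sum_comm]
  congr 1; ext i; congr 1; ext j; ring

/-- if Null(Bᵀ) = span(e) where e is the normalized all-ones vector,
A is SPD, w a unit vector with wᵀe ≠ 0, ρ > 0, then S = ρ w wᵀ + B A⁻¹ Bᵀ is
symmetric positive definite. -/
theorem stmt13 {n N : ℕ} (hN : 0 < N)
    (B : Matrix (Fin N) (Fin n) ℝ)
    (A : Matrix (Fin n) (Fin n) ℝ) (hA : A.PosDef)
    (e : Fin N → ℝ) (he : e = fun _ => 1 / Real.sqrt N)
    (hker : ∀ p : Fin N → ℝ, Bᵀ *ᵥ p = 0 ↔ ∃ c : ℝ, p = c • e)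
    (w : Fin N → ℝ) (hw : w ⬝ᵥ w = 1) (hγ : w ⬝ᵥ e ≠ 0)
    (ρ : ℝ) (hρ : 0 < ρ)
    (S : Matrix (Fin N) (Fin N) ℝ)
    (hS : S = ρ • vecMulVec w w + B * A⁻¹ * Bᵀ) :
    S.PosDef := by
  have hAinv : (A⁻¹).PosDef := hA.inv
  have hAt : A⁻¹ᵀ = A⁻¹ := by
    rw [← conjTranspose_eq_transpose_of_trivial]; exact hAinv.1
  rw [posDef_iff_dotProduct_mulVec]
  constructor
  · -- Hermitian
    rw [hS]
    show _ᴴ = _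
    rw [conjTranspose_eq_transpose_of_trivial]
    ext i j
    simp only [transpose_apply, Matrix.add_apply, Matrix.smul_apply, vecMulVec_apply, smul_eq_mul,
      mul_apply]
    rw [mul_comm (w j) (w i)]
    congr 1
    have : (B * A⁻¹ * Bᵀ)ᵀ = B * A⁻¹ * Bᵀ := by
      rw [transpose_mul, transpose_mul, transpose_transpose, hAt, Matrix.mul_assoc]
    exact congrFun (congrFun this i) j
  · intro x hx
    have hstar : star x = x := by ext i; simp
    rw [hS]
    simp only [add_mulVec, dotProduct_add, smul_mulVec, dotProduct_smul,
      RCLike.re_to_real, smul_eq_mul, hstar]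
    have hquad : x ⬝ᵥ ((B * A⁻¹ * Bᵀ) *ᵥ x) = (Bᵀ *ᵥ x) ⬝ᵥ (A⁻¹ *ᵥ (Bᵀ *ᵥ x)) := by
      rw [← mulVec_mulVec, ← mulVec_mulVec, dotProduct_mulVec, ← mulVec_transpose]
    rw [aux_vecMulVec_quad, hquad]
    by_cases hBx : Bᵀ *ᵥ x = 0
    · obtain ⟨c, hc⟩ := (hker x).mp hBx
      have hc0 : c ≠ 0 := by rintro rfl; simp at hc; exact hx hc
      have hwx : w ⬝ᵥ x ≠ 0 := by
        rw [hc, dotProduct_smul, smul_eq_mul]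
        exact mul_ne_zero hc0 hγ
      have h1 : 0 < ρ * ((w ⬝ᵥ x) * (w ⬝ᵥ x)) := mul_pos hρ (mul_self_pos.mpr hwx)
      rw [hBx]
      simpa using h1
    · have h2 : 0 < (Bᵀ *ᵥ x) ⬝ᵥ (A⁻¹ *ᵥ (Bᵀ *ᵥ x)) := by
        have := hAinv.dotProduct_mulVec_pos hBx
        have hstar2 : star (Bᵀ *ᵥ x) = Bᵀ *ᵥ x := by ext i; simp
        simpa [hstar2] using this
      have h1 : 0 ≤ ρ * ((w ⬝ᵥ x) * (w ⬝ᵥ x)) := mul_nonneg hρ.le (mul_self_nonneg _)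
      linarith
end

section
/- Let 𝒜 = [[A, −Bᵀ], [−B, −ρ w wᵀ]] with A SPD and let Ŝ = ρ w wᵀ + M with M SPD, 𝒫 = diag(A, Ŝ). If λ ≠ 1 is an eigenvalue of 𝒫⁻¹𝒜 with eigenvector (u, p), p ≠ 0, then λ²·pᵀŜp − λ·pᵀMp − pᵀSp = 0, where S = ρ w wᵀ + B A⁻¹ Bᵀ. -/
open Matrix

/-- an eigenpair (λ, (u,p)) with λ ≠ 1 and p ≠ 0 of the block
diagonally preconditioned saddle point system satisfies
λ²·pᵀŜp − λ·pᵀMp − pᵀSp = 0 where S = ρwwᵀ + BA⁻¹Bᵀ and Ŝ = ρwwᵀ + M. -/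
theorem stmt15 {n N : ℕ}
    (A : Matrix (Fin n) (Fin n) ℝ) (hA : A.PosDef)
    (B : Matrix (Fin N) (Fin n) ℝ)
    (w : Fin N → ℝ) (hw : w ⬝ᵥ w = 1) (ρ : ℝ) (hρ : 0 < ρ)
    (M : Matrix (Fin N) (Fin N) ℝ) (hM : M.PosDef)
    (Shat S : Matrix (Fin N) (Fin N) ℝ)
    (hShat : Shat = ρ • vecMulVec w w + M)
    (hS : S = ρ • vecMulVec w w + B * A⁻¹ * Bᵀ)
    (lam : ℝ) (hlam : lam ≠ 1)
    (u : Fin n → ℝ) (p : Fin N → ℝ) (hp : p ≠ 0)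
    (heig1 : A *ᵥ u - Bᵀ *ᵥ p = lam • (A *ᵥ u))
    (heig2 : -(B *ᵥ u) - (ρ • vecMulVec w w) *ᵥ p = lam • (Shat *ᵥ p)) :
    lam ^ 2 * (p ⬝ᵥ (Shat *ᵥ p)) - lam * (p ⬝ᵥ (M *ᵥ p)) - p ⬝ᵥ (S *ᵥ p) = 0 := by
  have hAinv : A⁻¹ * A = 1 := Matrix.nonsing_inv_mul A (isUnit_iff_ne_zero.mpr (ne_of_gt hA.det_pos))
  -- from heig1 : Bᵀ p = (1 - lam) • (A u)
  have h1 : Bᵀ *ᵥ p = (1 - lam) • (A *ᵥ u) := by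
    have : Bᵀ *ᵥ p = A *ᵥ u - lam • (A *ᵥ u) := by
      rw [← heig1]; abel
    rw [this, sub_smul, one_smul]
  have h2 : A⁻¹ *ᵥ (Bᵀ *ᵥ p) = (1 - lam) • u := by
    rw [h1, Matrix.mulVec_smul, Matrix.mulVec_mulVec, hAinv, Matrix.one_mulVec]
  -- vecMulVec action
  have hvv : (vecMulVec w w) *ᵥ p = (w ⬝ᵥ p) • w := by
    ext i
    simp only [vecMulVec_apply, mulVec, dotProduct, Pi.smul_apply, smul_eq_mul,
      Finset.mul_sum]
    rw [Finset.sum_mul]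
    exact Finset.sum_congr rfl fun j _ => by ring
  -- scalar identity from heig2
  have key : -(p ⬝ᵥ (B *ᵥ u)) - ρ * (w ⬝ᵥ p) ^ 2 = lam * (p ⬝ᵥ (Shat *ᵥ p)) := by
    have := congrArg (fun v => p ⬝ᵥ v) heig2
    simpa [dotProduct_smul, Matrix.smul_mulVec, hvv, dotProduct_neg,
      dotProduct_sub, smul_eq_mul, sq, dotProduct_comm w p, mul_comm,
      mul_left_comm] using this
  -- p ⬝ B A⁻¹ Bᵀ p = (1-lam) * (p ⬝ B u)
  have h3 : p ⬝ᵥ ((B * A⁻¹ * Bᵀ) *ᵥ p) = (1 - lam) * (p ⬝ᵥ (B *ᵥ u)) := by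
    rw [Matrix.mul_assoc B A⁻¹ Bᵀ, ← Matrix.mulVec_mulVec,
      ← Matrix.mulVec_mulVec, h2, Matrix.mulVec_smul, dotProduct_smul, smul_eq_mul]
  have hShatp : p ⬝ᵥ (Shat *ᵥ p) = ρ * (w ⬝ᵥ p) ^ 2 + p ⬝ᵥ (M *ᵥ p) := by
    rw [hShat]
    simp only [Matrix.add_mulVec, Matrix.smul_mulVec, hvv, dotProduct_add,
      dotProduct_smul, smul_eq_mul, sq, dotProduct_comm p w]
    try ring
  have hSp : p ⬝ᵥ (S *ᵥ p) = ρ * (w ⬝ᵥ p) ^ 2 + (1 - lam) * (p ⬝ᵥ (B *ᵥ u)) := by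
    rw [hS]
    simp only [Matrix.add_mulVec, dotProduct_add, h3, Matrix.smul_mulVec, hvv,
      dotProduct_smul, smul_eq_mul, sq, dotProduct_comm p w]
    try ring
  rw [hSp, hShatp]
  rw [hShatp] at key
  linear_combination (1 - lam) * key
end
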